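/- Let f : ℝ → ℝ^N be twice differentiable with ‖f″(t)‖ ≤ c₂ for all t, let h > 0, let q be a positive integer, and set t_j = j·h. Then for every integer k ≥ q, the q-step extrapolation error satisfies ‖((q+1)/q)·f(t_k) − (1/q)·f(t_{k−q}) − f(t_{k+1})‖ ≤ c₂ (q+1) h² / 2. -/

import Mathlib

open Set

lemma taylor1_le {E : Type*} [NormedAddCommGroup E] [NormedSpace ℝ E]
    (f f' f'' : ℝ → E) (hf : ∀ t, HasDerivAt f (f' t) t) (hf' : ∀ t, HasDerivAt f' (f'' t) t)
    (c : ℝ) (hc : ∀ t, ‖f'' t‖ ≤ c) (a b : ℝ) (hab : a ≤ b) :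
    ‖f b - f a - (b - a) • f' a‖ ≤ c * (b - a) ^ 2 / 2 := by
  set g : ℝ → E := fun t => f t - f a - (t - a) • f' a with hg
  have hg' : ∀ t, HasDerivAt g (f' t - f' a) t := by
    intro t
    have : HasDerivAt (fun t : ℝ => (t - a) • f' a) ((1 : ℝ) • f' a) t := by
      exact (((hasDerivAt_id t).sub_const a).smul_const (f' a))
    have h2 := ((hf t).sub_const (f a)).sub this
    rw [one_smul] at h2
    exact h2
  have hlip : ∀ t, ‖f' t - f' a‖ ≤ c * ‖t - a‖ := by
    intro t
    exact convex_univ.norm_image_sub_le_of_norm_hasDerivWithin_le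
      (fun x _ => (hf' x).hasDerivWithinAt) (fun x _ => hc x) trivial trivial
  have key := image_norm_le_of_norm_deriv_right_le_deriv_boundary
    (f := g) (f' := fun t => f' t - f' a) (a := a) (b := b)
    (fun x _ => (hg' x).continuousAt.continuousWithinAt)
    (fun x _ => (hg' x).hasDerivWithinAt)
    (B := fun t => c * (t - a) ^ 2 / 2) (B' := fun t => c * (t - a))
    (by simp [hg])
    (fun x => by
      have : HasDerivAt (fun t : ℝ => c * (t - a) ^ 2 / 2) (c * (2 * (x - a) ^ 1 * 1) / 2) x := by
        exact (((hasDerivAt_id x).sub_const a).pow 2).const_mul c |>.div_const 2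
      convert this using 1
      ring)
    (fun x hx => by
      have := hlip x
      rwa [Real.norm_eq_abs, abs_of_nonneg (by linarith [hx.1])] at this)
  simpa [hg] using key (right_mem_Icc.2 hab)

lemma taylor1 {E : Type*} [NormedAddCommGroup E] [NormedSpace ℝ E]
    (f f' f'' : ℝ → E) (hf : ∀ t, HasDerivAt f (f' t) t) (hf' : ∀ t, HasDerivAt f' (f'' t) t)
    (c : ℝ) (hc : ∀ t, ‖f'' t‖ ≤ c) (a b : ℝ) :
    ‖f b - f a - (b - a) • f' a‖ ≤ c * (b - a) ^ 2 / 2 := by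
  rcases le_total a b with hab | hba
  · exact taylor1_le f f' f'' hf hf' c hc a b hab
  · -- reflect
    set F : ℝ → E := fun t => f (-t)
    set F' : ℝ → E := fun t => -f' (-t)
    set F'' : ℝ → E := fun t => f'' (-t)
    have hF : ∀ t, HasDerivAt F (F' t) t := fun t => by
      have := HasDerivAt.scomp t (hf (-t)) (hasDerivAt_neg t)
      simp at this
      exact this
    have hF' : ∀ t, HasDerivAt F' (F'' t) t := fun t => by
      have := (HasDerivAt.scomp t (hf' (-t)) (hasDerivAt_neg t)).neg
      simp at this
      exact this
    have := taylor1_le F F' F'' hF hF' c (fun t => hc (-t)) (-a) (-b) (by linarith)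
    have e : F (-b) - F (-a) - (-b - -a) • F' (-a) = f b - f a - (b - a) • f' a := by
      simp [F, F']
      module
    rw [e] at this
    convert this using 2
    ring

theorem q_step_extrapolation_error
    (N : ℕ) (f f' f'' : ℝ → EuclideanSpace ℝ (Fin N))
    (hf : ∀ t, HasDerivAt f (f' t) t) (hf' : ∀ t, HasDerivAt f' (f'' t) t)
    (c₂ : ℝ) (hc₂ : ∀ t, ‖f'' t‖ ≤ c₂)
    (h : ℝ) (hh : 0 < h) (q : ℕ) (hq : 0 < q) (k : ℕ) (hk : q ≤ k) :
    ‖(((q : ℝ) + 1) / q) • f ((k : ℝ) * h) - ((1 : ℝ) / q) • f (((k - q : ℕ) : ℝ) * h)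
        - f (((k : ℝ) + 1) * h)‖ ≤ c₂ * ((q : ℝ) + 1) * h ^ 2 / 2 := by
  have hr : (0 : ℝ) < q := by exact_mod_cast hq
  have hr' : (q : ℝ) ≠ 0 := ne_of_gt hr
  set a : ℝ := (k : ℝ) * h
  have hcast : ((k - q : ℕ) : ℝ) * h = a - (q : ℝ) * h := by
    rw [Nat.cast_sub hk]; ring
  have hnext : ((k : ℝ) + 1) * h = a + h := by ring
  set R₁ : EuclideanSpace ℝ (Fin N) := f (a + h) - f a - ((a + h) - a) • f' a with hR₁
  set R₂ : EuclideanSpace ℝ (Fin N) :=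
    f (a - (q : ℝ) * h) - f a - ((a - (q : ℝ) * h) - a) • f' a with hR₂
  have hb₁ : ‖R₁‖ ≤ c₂ * h ^ 2 / 2 := by
    have := taylor1 f f' f'' hf hf' c₂ hc₂ a (a + h)
    rw [hR₁]
    have e : (a + h - a) ^ 2 = h ^ 2 := by ring
    rwa [e] at this
  have hb₂ : ‖R₂‖ ≤ c₂ * ((q : ℝ) * h) ^ 2 / 2 := by
    have := taylor1 f f' f'' hf hf' c₂ hc₂ a (a - (q : ℝ) * h)
    have e : (a - (q : ℝ) * h - a) ^ 2 = ((q : ℝ) * h) ^ 2 := by ring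
    rwa [e] at this
  have hE : (((q : ℝ) + 1) / q) • f a - ((1 : ℝ) / q) • f (a - (q : ℝ) * h) - f (a + h)
      = -(((1 : ℝ) / q) • R₂) - R₁ := by
    rw [hR₁, hR₂]
    match_scalars <;> (field_simp; try ring)
  rw [hcast, hnext, hE]
  have tri : ‖-(((1 : ℝ) / q) • R₂) - R₁‖ ≤ (1 / (q : ℝ)) * ‖R₂‖ + ‖R₁‖ := by
    calc ‖-(((1 : ℝ) / q) • R₂) - R₁‖ ≤ ‖-(((1 : ℝ) / q) • R₂)‖ + ‖R₁‖ := norm_sub_le _ _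
    _ = (1 / (q : ℝ)) * ‖R₂‖ + ‖R₁‖ := by
        rw [norm_neg, norm_smul, Real.norm_eq_abs, abs_of_pos (by positivity)]
  have hfin : (1 / (q : ℝ)) * (c₂ * ((q : ℝ) * h) ^ 2 / 2) + c₂ * h ^ 2 / 2
      = c₂ * ((q : ℝ) + 1) * h ^ 2 / 2 := by field_simp
  have : (1 / (q : ℝ)) * ‖R₂‖ + ‖R₁‖ ≤ c₂ * ((q : ℝ) + 1) * h ^ 2 / 2 := by
    rw [← hfin]
    gcongr
  linarith [tri, this]
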